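/- Let P be an R-vine of dimension ℓ. Then for every pair of distinct minimal elements i, j, there exists exactly one non-minimal node v of P whose conditioned set is {i, j}; i.e., the map v ↦ C_v is a bijection from the non-minimal nodes of P to the 2-element subsets of min(P). -/

import Mathlib

/-- The `i`-th associated graph of a graded poset: vertices are the elements of rank `i`,
with `a` and `b` adjacent when they are (distinct, of rank `i` and) covered by a common
element (which then has cover-set `{a, b}`). -/
def coverGraph {P : Type*} [PartialOrder P] (rk : P → ℕ) (i : ℕ) : SimpleGraph P where
  Adj a b := a ≠ b ∧ rk a = i ∧ rk b = i ∧ ∃ v : P, a ⋖ v ∧ b ⋖ v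
  symm := ⟨by
    rintro a b ⟨hne, ha, hb, v, h1, h2⟩
    exact ⟨hne.symm, hb, ha, v, h2, h1⟩⟩
  loopless := ⟨by rintro a ⟨hne, -⟩; exact hne rfl⟩

/-- A vine: a finite graded poset (with rank function `rk`, minimal elements of rank 1)
in which every non-minimal node covers exactly two nodes, any two distinct nodes of the
same rank are covered by at most one common node, and each associated graph is a
forest. -/
structure IsVine {P : Type*} [PartialOrder P] [Finite P] (rk : P → ℕ) : Prop where
  rk_strictMono : ∀ x y : P, x < y → rk x < rk y
  rk_covBy : ∀ x y : P, x ⋖ y → rk y = rk x + 1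
  rk_min : ∀ x : P, IsMin x → rk x = 1
  covers_two : ∀ v : P, ¬ IsMin v → {a : P | a ⋖ v}.ncard = 2
  cover_unique : ∀ a b : P, a ≠ b → rk a = rk b →
    ∀ v w : P, a ⋖ v → b ⋖ v → a ⋖ w → b ⋖ w → v = w
  forest : ∀ i : ℕ, (coverGraph rk i).IsAcyclic

/-- The rank of a graded poset: the largest rank of an element. -/
noncomputable def vineRank {P : Type*} (rk : P → ℕ) : ℕ := sSup (Set.range rk)

/-- The proximity condition: any two distinct nodes of the same rank `≥ 2` that are
covered by a common node themselves cover a common node. -/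
def Proximity {P : Type*} [PartialOrder P] (rk : P → ℕ) : Prop :=
  ∀ a b : P, a ≠ b → rk a = rk b → 2 ≤ rk a →
    (∃ v : P, a ⋖ v ∧ b ⋖ v) → ∃ c : P, c ⋖ a ∧ c ⋖ b

/-- A regular vine (R-vine): a vine whose rank equals its dimension (the number of
minimal elements), whose associated forests (for `1 ≤ i ≤ rank`) are trees, and
which satisfies the proximity condition. -/
structure IsRVine {P : Type*} [PartialOrder P] [Finite P] (rk : P → ℕ)
    extends IsVine rk : Prop where
  rank_eq_dim : vineRank rk = {x : P | IsMin x}.ncard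
  tree : ∀ i : ℕ, 1 ≤ i → i ≤ vineRank rk →
    ((coverGraph rk i).induce {x : P | rk x = i}).Connected
  proximity : Proximity rk

/-- A locally regular vine (LR-vine): a vine all of whose principal ideals
(with the induced order and rank) are R-vines. -/
def IsLRVine {P : Type*} [PartialOrder P] [Finite P] (rk : P → ℕ) : Prop :=
  IsVine rk ∧ ∀ v : P, IsRVine (P := {x : P // x ≤ v}) (fun x => rk x.val)

/-- The complete union of a node: the set of minimal elements below it. -/
def completeUnion {P : Type*} [PartialOrder P] (a : P) : Set P :=
  {x : P | IsMin x ∧ x ≤ a}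

/-- The conditioned set of a (non-minimal) node `v`: the minimal elements lying below
exactly one of the two nodes covered by `v` (the symmetric difference of the complete
unions of the two covered nodes). -/
def conditionedSet {P : Type*} [PartialOrder P] (v : P) : Set P :=
  {m : P | IsMin m ∧ ∃! a : P, a ⋖ v ∧ m ≤ a}

section Basics
variable {P : Type*} [PartialOrder P] [Finite P] {rk : P → ℕ}

/-- Every element has a minimal element below it. -/
lemma exists_min_le (x : P) : ∃ m : P, IsMin m ∧ m ≤ x := by
  obtain ⟨b, hb, hmin⟩ := exists_minimal_le_of_wellFoundedLT (fun _ => True) x trivial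
  exact ⟨b, fun c hc => hmin.2 trivial hc, hb⟩

lemma rk_le_of_le (h : IsVine rk) {x y : P} (hxy : x ≤ y) : rk x ≤ rk y := by
  rcases eq_or_lt_of_le hxy with rfl | hlt
  · exact le_rfl
  · exact (h.rk_strictMono _ _ hlt).le

lemma one_le_rk (h : IsVine rk) (x : P) : 1 ≤ rk x := by
  obtain ⟨m, hm, hmx⟩ := exists_min_le x
  calc 1 = rk m := (h.rk_min m hm).symm
  _ ≤ rk x := rk_le_of_le h hmx

/-- A non-minimal element covers exactly two (distinct) elements. -/
lemma exists_children (h : IsVine rk) {v : P} (hv : ¬ IsMin v) :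
    ∃ a b : P, a ≠ b ∧ {x : P | x ⋖ v} = {a, b} := by
  have := h.covers_two v hv
  rw [Set.ncard_eq_two] at this
  exact this

lemma rk_child (h : IsVine rk) {a v : P} (ha : a ⋖ v) : rk a + 1 = rk v :=
  (h.rk_covBy a v ha).symm

/-- An element of rank 1 is minimal. -/
lemma isMin_of_rk_eq_one (h : IsVine rk) {x : P} (hx : rk x = 1) : IsMin x := by
  by_contra hm
  obtain ⟨a, b, hab, hset⟩ := exists_children h hm
  have ha : a ⋖ x := by rw [Set.ext_iff] at hset; exact (hset a).2 (by simp)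
  have := rk_child h ha
  have := one_le_rk h a
  omega

lemma two_le_rk_of_not_isMin (h : IsVine rk) {x : P} (hx : ¬ IsMin x) : 2 ≤ rk x := by
  have h1 := one_le_rk h x
  rcases Nat.lt_or_ge (rk x) 2 with h2 | h2
  · exact absurd (isMin_of_rk_eq_one h (by omega)) hx
  · exact h2

lemma not_isMin_of_two_le_rk (h : IsVine rk) {x : P} (hx : 2 ≤ rk x) : ¬ IsMin x := by
  intro hm; rw [h.rk_min x hm] at hx; omega

/-- Lemma A: below any strict inequality there is a covered element in between. -/
lemma exists_le_covby (h : IsVine rk) {y v : P} (hyv : y < v) :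
    ∃ c : P, y ≤ c ∧ c ⋖ v := by
  classical
  set S : Set P := {c | y ≤ c ∧ c < v} with hS
  have hfin : S.Finite := Set.toFinite S
  have hne : S.Nonempty := ⟨y, le_rfl, hyv⟩
  obtain ⟨c, hcS, hcmax⟩ := Set.Finite.exists_maximalFor id S hfin hne
  refine ⟨c, hcS.1, hcS.2, fun d hcd hdv => ?_⟩
  have : d ∈ S := ⟨hcS.1.trans hcd.le, hdv⟩
  exact absurd (le_antisymm hcd.le (hcmax this hcd.le)) hcd.ne

lemma min_lt_of_not_isMin (h : IsVine rk) {m v : P} (hm : IsMin m) (hmv : m ≤ v)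
    (hv : ¬ IsMin v) : m < v :=
  lt_of_le_of_ne hmv (by rintro rfl; exact hv hm)

/-- A minimal element below a non-minimal `v` is below one of the children. -/
lemma le_child (h : IsVine rk) {m v a b : P} (hm : m < v)
    (hset : {x : P | x ⋖ v} = {a, b}) : m ≤ a ∨ m ≤ b := by
  obtain ⟨c, hmc, hcv⟩ := exists_le_covby h hm
  have : c ∈ ({a, b} : Set P) := hset ▸ hcv
  rcases this with rfl | rfl
  · exact Or.inl hmc
  · exact Or.inr hmc

lemma rk_le_vineRank (x : P) : rk x ≤ vineRank rk := by
  apply le_csSup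
  · exact (Set.finite_range rk).bddAbove
  · exact Set.mem_range_self x

/-- The common child of two children of a common parent is unique. -/
lemma common_child_unique (h : IsVine rk) {a b c c' : P} (hab : a ≠ b)
    (hca : c ⋖ a) (hcb : c ⋖ b) (hc'a : c' ⋖ a) (hc'b : c' ⋖ b) : c = c' := by
  by_contra hne
  have hrk : rk c = rk c' := by
    have := rk_child h hca; have := rk_child h hc'a; omega
  exact hab (h.cover_unique c c' hne hrk a b hca hc'a hcb hc'b)
end Basics
section Star
variable {P : Type*} [PartialOrder P] [Finite P] {rk : P → ℕ}

lemma coverGraph_adj {i : ℕ} {a b : P} :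
    (coverGraph rk i).Adj a b ↔ a ≠ b ∧ rk a = i ∧ rk b = i ∧ ∃ v : P, a ⋖ v ∧ b ⋖ v :=
  Iff.rfl

/-- Along a walk at level `K = J+1`, taking a child of the start and a child of the end,
there is a walk at level `J` between them whose edges are all child-pairs of vertices of
the original walk. -/
lemma walk_children (h : IsRVine rk) {K J : ℕ} (hKJ : J + 1 = K) :
    ∀ {v w : P} (q : (coverGraph rk K).Walk v w), rk v = K → ∀ {c y : P}, c ⋖ v → y ⋖ w →
    ∃ r : (coverGraph rk J).Walk c y, ∀ a b : P, s(a, b) ∈ r.edges →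
      ∃ z ∈ q.support, a ⋖ z ∧ b ⋖ z := by
  intro v w q
  induction q with
  | @nil v0 =>
    intro hv c y hc hy
    rcases eq_or_ne c y with rfl | hne
    · exact ⟨SimpleGraph.Walk.nil, by simp⟩
    · have hrc : rk c = J := by have := rk_child h.toIsVine hc; omega
      have hry : rk y = J := by have := rk_child h.toIsVine hy; omega
      refine ⟨SimpleGraph.Walk.cons (coverGraph_adj.2 ⟨hne, hrc, hry, _, hc, hy⟩) SimpleGraph.Walk.nil, ?_⟩
      intro a b hab
      simp only [SimpleGraph.Walk.edges_cons, SimpleGraph.Walk.edges_nil,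
        List.mem_singleton] at hab
      rw [Sym2.eq_iff] at hab
      refine ⟨v0, by simp, ?_⟩
      rcases hab with ⟨rfl, rfl⟩ | ⟨rfl, rfl⟩
      · exact ⟨hc, hy⟩
      · exact ⟨hy, hc⟩
  | @cons v v' w hadj q' ih =>
    intro hv c y hc hy
    obtain ⟨hne, hrv, hrv', V, hvV, hv'V⟩ := coverGraph_adj.1 hadj
    have h2 : 2 ≤ rk v := by have := one_le_rk h.toIsVine c; have := rk_child h.toIsVine hc; omega
    obtain ⟨c', hc'v, hc'v'⟩ := h.proximity v v' hne (hrv.trans hrv'.symm) h2 ⟨V, hvV, hv'V⟩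
    obtain ⟨r', hr'⟩ := ih hrv' hc'v' hy
    rcases eq_or_ne c c' with rfl | hcc
    · refine ⟨r', fun a b hab => ?_⟩
      obtain ⟨z, hz, hab'⟩ := hr' a b hab
      exact ⟨z, by simp [hz], hab'⟩
    · have hrc : rk c = J := by have := rk_child h.toIsVine hc; omega
      have hrc' : rk c' = J := by have := rk_child h.toIsVine hc'v; omega
      refine ⟨SimpleGraph.Walk.cons (coverGraph_adj.2 ⟨hcc, hrc, hrc', v, hc, hc'v⟩) r', ?_⟩
      intro a b hab
      simp only [SimpleGraph.Walk.edges_cons, List.mem_cons] at hab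
      rcases hab with hab | hab
      · rw [Sym2.eq_iff] at hab
        refine ⟨v, by simp, ?_⟩
        rcases hab with ⟨rfl, rfl⟩ | ⟨rfl, rfl⟩
        · exact ⟨hc, hc'v⟩
        · exact ⟨hc'v, hc⟩
      · obtain ⟨z, hz, hab'⟩ := hr' a b hab
        exact ⟨z, by simp [hz], hab'⟩

/-- The star lemma: a path (at any level) between two covers of `y` consists
entirely of covers of `y`. -/
lemma covers_of_path (h : IsRVine rk) {K : ℕ} :
    ∀ {u w : P} (p : (coverGraph rk K).Walk u w), p.IsPath →
    ∀ {y : P}, y ⋖ u → y ⋖ w → ∀ z ∈ p.support, y ⋖ z := by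
  classical
  intro u w p
  induction p with
  | nil =>
    intro _ y hyu _ z hz
    simp only [SimpleGraph.Walk.support_nil, List.mem_singleton] at hz
    subst hz; exact hyu
  | @cons u v w hadj q ih =>
    intro hp y hyu hyw z hz
    obtain ⟨hne, hru, hrv, V, huV, hvV⟩ := coverGraph_adj.1 hadj
    have h2 : 2 ≤ rk u := by
      have := one_le_rk h.toIsVine y; have := rk_child h.toIsVine hyu; omega
    obtain ⟨c, hcu, hcv⟩ := h.proximity u v hne (hru.trans hrv.symm) h2 ⟨V, huV, hvV⟩
    have hqpath : q.IsPath := hp.of_cons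
    have husup : u ∉ q.support := (SimpleGraph.Walk.cons_isPath_iff _ _).1 hp |>.2
    have hcy : c = y := by
      by_contra hcy
      set J := rk y with hJ
      have hKJ : J + 1 = K := by have := rk_child h.toIsVine hyu; omega
      obtain ⟨r, hr⟩ := walk_children h hKJ q hrv hcv hyw
      have hadjcy : (coverGraph rk J).Adj c y := by
        refine ⟨hcy, ?_, rfl, u, hcu, hyu⟩
        have := rk_child h.toIsVine hcu; omega
      have hedge : s(c, y) ∈ r.edges := by
        by_contra hmem
        have hsingle : (SimpleGraph.Path.singleton hadjcy : (coverGraph rk J).Path c y)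
            = ⟨r.bypass, r.bypass_isPath⟩ := (h.forest J).path_unique _ _
        have : s(c, y) ∈ r.bypass.edges := by
          rw [← congrArg (fun (p : (coverGraph rk J).Path c y) => p.1.edges) hsingle]
          simp [SimpleGraph.Path.singleton]
        exact hmem (r.edges_bypass_subset this)
      obtain ⟨z', hz', hcz', hyz'⟩ := hr c y hedge
      have hrky : rk c = rk y := by
        have := rk_child h.toIsVine hcu; have := rk_child h.toIsVine hyu; omega
      have : u = z' := h.cover_unique c y hcy hrky u z' hcu hyu hcz' hyz'
      exact husup (this ▸ hz')
    subst hcy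
    simp only [SimpleGraph.Walk.support_cons, List.mem_cons] at hz
    rcases hz with rfl | hz
    · exact hyu
    · exact ih hqpath hcv hyw z hz
end Star
section Subtree
variable {P : Type*} [PartialOrder P] [Finite P] {rk : P → ℕ}

/-- Two covers of a common node are connected at their level by a walk all of whose
vertices lie above that node. -/
lemma covers_connected (h : IsRVine rk) {L : ℕ} {a₀ a b : P} (ha : a₀ ⋖ a) (hb : a₀ ⋖ b)
    (hL : rk a = L) :
    ∃ p : (coverGraph rk L).Walk a b, ∀ z ∈ p.support, a₀ ≤ z := by
  classical
  have hrb : rk b = L := by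
    have := rk_child h.toIsVine ha; have := rk_child h.toIsVine hb; omega
  have hL1 : 1 ≤ L := hL ▸ one_le_rk h.toIsVine a
  have hL2 : L ≤ vineRank rk := hL ▸ rk_le_vineRank a
  have hconn := h.tree L hL1 hL2
  have hreach := hconn.preconnected ⟨a, hL⟩ ⟨b, hrb⟩
  obtain ⟨w0⟩ := hreach
  let w1 : (coverGraph rk L).Walk a b :=
    w0.map (SimpleGraph.Embedding.induce {x : P | rk x = L}).toHom
  have hpath := w1.bypass_isPath
  refine ⟨w1.bypass, fun z hz => ?_⟩
  have : a₀ ⋖ z := covers_of_path h w1.bypass hpath ha hb z hz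
  exact this.le

/-- Lift a walk at level `K` with all vertices above `m` to a walk at level `K+1`
between given covers of its endpoints, with all vertices above `m`. -/
lemma lift_walk (h : IsRVine rk) {K : ℕ} {m : P} :
    ∀ {a₀ b₀ : P} (p₀ : (coverGraph rk K).Walk a₀ b₀), rk a₀ = K →
    (∀ z ∈ p₀.support, m ≤ z) →
    ∀ {a b : P}, a₀ ⋖ a → b₀ ⋖ b →
    ∃ p : (coverGraph rk (K + 1)).Walk a b, ∀ z ∈ p.support, m ≤ z := by
  intro a₀ b₀ p₀
  induction p₀ with
  | @nil v0 =>
    intro hr0 hsup a b ha hb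
    have hrk : rk a = K + 1 := by
      have := rk_child h.toIsVine ha; omega
    obtain ⟨p, hp⟩ := covers_connected h ha hb hrk
    exact ⟨p, fun z hz => (hsup v0 (by simp)).trans (hp z hz)⟩
  | @cons x y b₀ hadj q ih =>
    intro hr0 hsup a b ha hb
    obtain ⟨hne, hx, hy, V, hxV, hyV⟩ := coverGraph_adj.1 hadj
    have hrka : rk a = K + 1 := by have := rk_child h.toIsVine ha; omega
    obtain ⟨p₁, hp₁⟩ := covers_connected h ha hxV hrka
    obtain ⟨p₂, hp₂⟩ := ih hy (fun z hz => hsup z (by simp [hz])) hyV hb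
    refine ⟨p₁.append p₂, fun z hz => ?_⟩
    rw [SimpleGraph.Walk.mem_support_append_iff] at hz
    rcases hz with hz | hz
    · exact (hsup x (by simp)).trans (hp₁ z hz)
    · exact hp₂ z hz

/-- Subtree connectivity: two nodes of the same rank above a common minimal element `m`
are connected at their level by a walk all of whose vertices lie above `m`. -/
lemma subtree_walk (h : IsRVine rk) {m : P} (hm : IsMin m) :
    ∀ (K : ℕ) {a b : P}, rk a = K → rk b = K → m ≤ a → m ≤ b →
    ∃ p : (coverGraph rk K).Walk a b, ∀ z ∈ p.support, m ≤ z := by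
  intro K
  induction K with
  | zero => intro a b hra _ _ _; have := one_le_rk h.toIsVine a; omega
  | succ K ih =>
    intro a b hra hrb hma hmb
    rcases Nat.eq_zero_or_pos K with rfl | hK
    · -- level 1 : a = b = m
      have ha' : IsMin a := isMin_of_rk_eq_one h.toIsVine hra
      have hb' : IsMin b := isMin_of_rk_eq_one h.toIsVine hrb
      have ham : a = m := le_antisymm (ha' hma) hma
      have hbm : b = m := le_antisymm (hb' hmb) hmb
      subst ham; subst hbm
      exact ⟨SimpleGraph.Walk.nil, by intro z hz; simp at hz; subst hz; exact hma⟩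
    · have hna : ¬ IsMin a := not_isMin_of_two_le_rk h.toIsVine (by omega)
      have hnb : ¬ IsMin b := not_isMin_of_two_le_rk h.toIsVine (by omega)
      obtain ⟨a₀, hma₀, ha₀⟩ := exists_le_covby h.toIsVine
        (min_lt_of_not_isMin h.toIsVine hm hma hna)
      obtain ⟨b₀, hmb₀, hb₀⟩ := exists_le_covby h.toIsVine
        (min_lt_of_not_isMin h.toIsVine hm hmb hnb)
      have hra₀ : rk a₀ = K := by have := rk_child h.toIsVine ha₀; omega
      have hrb₀ : rk b₀ = K := by have := rk_child h.toIsVine hb₀; omega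
      obtain ⟨p₀, hp₀⟩ := ih hra₀ hrb₀ hma₀ hmb₀
      exact lift_walk h p₀ hra₀ hp₀ ha₀ hb₀
end Subtree
section LemmaB
variable {P : Type*} [PartialOrder P] [Finite P] {rk : P → ℕ}

/-- Given one child of a non-minimal node, there is exactly one other child. -/
lemma other_child (h : IsVine rk) {a c : P} (hna : ¬ IsMin a) (hc : c ⋖ a) :
    ∃ a', a' ⋖ a ∧ a' ≠ c ∧ ∀ x, x ⋖ a → x = c ∨ x = a' := by
  obtain ⟨x1, x2, h12, hset⟩ := exists_children h hna
  have hc' : c ∈ ({x1, x2} : Set P) := hset ▸ hc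
  have hmem : ∀ x : P, x ⋖ a → x ∈ ({x1, x2} : Set P) := fun x hx => hset ▸ hx
  have hx1 : x1 ⋖ a := by rw [Set.ext_iff] at hset; exact (hset x1).2 (by simp)
  have hx2 : x2 ⋖ a := by rw [Set.ext_iff] at hset; exact (hset x2).2 (by simp)
  rcases hc' with rfl | rfl
  · exact ⟨x2, hx2, fun hx => h12 hx.symm, fun x hx => by
      rcases hmem x hx with h' | h' <;> [left; right] <;> exact h'⟩
  · exact ⟨x1, hx1, fun hx => h12 hx, fun x hx => by
      rcases hmem x hx with h' | h' <;> [right; left] <;> exact h'⟩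

/-- Lemma B: if a minimal element lies below two children of a common node,
then it lies below their (unique) common child. -/
lemma common_child_le (h : IsRVine rk) {m a b v : P} (hm : IsMin m) (hab : a ≠ b)
    (hav : a ⋖ v) (hbv : b ⋖ v) (hma : m ≤ a) (hmb : m ≤ b) :
    ∃ c : P, c ⋖ a ∧ c ⋖ b ∧ m ≤ c := by
  classical
  have hrk : rk a = rk b := by
    have := rk_child h.toIsVine hav; have := rk_child h.toIsVine hbv; omega
  have h2 : 2 ≤ rk a := by
    by_contra h2
    have h1 : rk a = 1 := by have := one_le_rk h.toIsVine a; omega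
    have ha' : IsMin a := isMin_of_rk_eq_one h.toIsVine h1
    have hb' : IsMin b := isMin_of_rk_eq_one h.toIsVine (hrk ▸ h1)
    have e1 : a = m := le_antisymm (ha' hma) hma
    have e2 : b = m := le_antisymm (hb' hmb) hmb
    exact hab (e1.trans e2.symm)
  obtain ⟨c, hca, hcb⟩ := h.proximity a b hab hrk h2 ⟨v, hav, hbv⟩
  refine ⟨c, hca, hcb, ?_⟩
  by_contra hnc
  have hna : ¬ IsMin a := not_isMin_of_two_le_rk h.toIsVine h2
  have hnb : ¬ IsMin b := not_isMin_of_two_le_rk h.toIsVine (hrk ▸ h2)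
  obtain ⟨a', ha'a, ha'c, ha'all⟩ := other_child h.toIsVine hna hca
  obtain ⟨b', hb'b, hb'c, hb'all⟩ := other_child h.toIsVine hnb hcb
  -- m is below a' and b'
  have hma' : m ≤ a' := by
    obtain ⟨d, hmd, hda⟩ := exists_le_covby h.toIsVine
      (min_lt_of_not_isMin h.toIsVine hm hma hna)
    rcases ha'all d hda with rfl | rfl
    · exact absurd hmd hnc
    · exact hmd
  have hmb' : m ≤ b' := by
    obtain ⟨d, hmd, hdb⟩ := exists_le_covby h.toIsVine
      (min_lt_of_not_isMin h.toIsVine hm hmb hnb)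
    rcases hb'all d hdb with rfl | rfl
    · exact absurd hmd hnc
    · exact hmd
  have hab' : a' ≠ b' := by
    rintro rfl
    exact hab (h.cover_unique c a' (Ne.symm ha'c)
      (by have := rk_child h.toIsVine hca; have := rk_child h.toIsVine ha'a; omega)
      a b hca ha'a hcb hb'b)
  -- the walk from a' to b' below m at level J
  set J := rk a - 1 with hJ
  have hra' : rk a' = J := by have := rk_child h.toIsVine ha'a; omega
  have hrb' : rk b' = J := by have := rk_child h.toIsVine hb'b; omega
  obtain ⟨p, hp⟩ := subtree_walk h hm J hra' hrb' hma' hmb'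
  -- the two-edge path a' - c - b'
  have hrc : rk c = J := by have := rk_child h.toIsVine hca; omega
  have hadj1 : (coverGraph rk J).Adj a' c := ⟨ha'c, hra', hrc, a, ha'a, hca⟩
  have hadj2 : (coverGraph rk J).Adj c b' := ⟨fun hcb' => hb'c hcb'.symm, hrc, hrb', b, hcb, hb'b⟩
  let q : (coverGraph rk J).Walk a' b' :=
    SimpleGraph.Walk.cons hadj1 (SimpleGraph.Walk.cons hadj2 SimpleGraph.Walk.nil)
  have hq : q.IsPath := by
    rw [SimpleGraph.Walk.isPath_def]
    simp only [q, SimpleGraph.Walk.support_cons, SimpleGraph.Walk.support_nil]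
    refine List.nodup_cons.2 ⟨?_, List.nodup_cons.2 ⟨?_, List.nodup_singleton _⟩⟩
    · simp only [List.mem_cons, List.mem_singleton, List.not_mem_nil]
      push_neg
      exact ⟨ha'c, hab', trivial⟩
    · simp only [List.mem_singleton]
      exact fun h' => hb'c h'.symm
  have huniq : (⟨p.bypass, p.bypass_isPath⟩ : (coverGraph rk J).Path a' b') = ⟨q, hq⟩ :=
    (h.forest J).path_unique _ _
  have hcsup : c ∈ p.bypass.support := by
    rw [show p.bypass = q from congrArg Subtype.val huniq]
    simp [q]
  exact hnc (hp c (p.support_bypass_subset hcsup))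
end LemmaB
section Union
variable {P : Type*} [PartialOrder P] [Finite P] {rk : P → ℕ}

lemma not_isMin_of_covBy {a v : P} (hav : a ⋖ v) : ¬ IsMin v :=
  fun hmin => absurd (hmin hav.le) (not_le_of_gt hav.lt)

lemma children_eq (h : IsVine rk) {v a b : P} (hav : a ⋖ v) (hbv : b ⋖ v) (hab : a ≠ b) :
    ∀ x : P, x ⋖ v → x = a ∨ x = b := by
  obtain ⟨a', ha'v, ha'a, hall⟩ := other_child h (not_isMin_of_covBy hav) hav
  have hba' : b = a' := by rcases hall b hbv with rfl | rfl; exact absurd rfl hab; rfl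
  intro x hx
  rcases hall x hx with rfl | rfl
  · exact Or.inl rfl
  · exact Or.inr hba'.symm

lemma completeUnion_min {m : P} (hm : IsMin m) : completeUnion m = {m} := by
  ext x
  simp only [completeUnion, Set.mem_setOf_eq, Set.mem_singleton_iff]
  constructor
  · rintro ⟨hx, hxm⟩; exact le_antisymm hxm (hm hxm)
  · rintro rfl; exact ⟨hm, le_rfl⟩

lemma mem_completeUnion {m a : P} : m ∈ completeUnion a ↔ IsMin m ∧ m ≤ a := Iff.rfl

lemma completeUnion_union (h : IsVine rk) {v a b : P} (hav : a ⋖ v) (hbv : b ⋖ v)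
    (hab : a ≠ b) : completeUnion v = completeUnion a ∪ completeUnion b := by
  ext m
  simp only [completeUnion, Set.mem_setOf_eq, Set.mem_union]
  constructor
  · rintro ⟨hm, hmv⟩
    have hlt : m < v := min_lt_of_not_isMin h hm hmv (not_isMin_of_covBy hav)
    obtain ⟨d, hmd, hdv⟩ := exists_le_covby h hlt
    rcases children_eq h hav hbv hab d hdv with rfl | rfl
    · exact Or.inl ⟨hm, hmd⟩
    · exact Or.inr ⟨hm, hmd⟩
  · rintro (⟨hm, hma⟩ | ⟨hm, hmb⟩)
    · exact ⟨hm, hma.trans hav.le⟩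
    · exact ⟨hm, hmb.trans hbv.le⟩

lemma completeUnion_inter (h : IsRVine rk) {v a b c : P} (hav : a ⋖ v) (hbv : b ⋖ v)
    (hab : a ≠ b) (hca : c ⋖ a) (hcb : c ⋖ b) :
    completeUnion a ∩ completeUnion b = completeUnion c := by
  ext m
  simp only [completeUnion, Set.mem_inter_iff, Set.mem_setOf_eq]
  constructor
  · rintro ⟨⟨hm, hma⟩, ⟨_, hmb⟩⟩
    obtain ⟨c', hc'a, hc'b, hmc'⟩ := common_child_le h hm hab hav hbv hma hmb
    have : c = c' := common_child_unique h.toIsVine hab hca hcb hc'a hc'b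
    exact ⟨hm, this ▸ hmc'⟩
  · rintro ⟨hm, hmc⟩
    exact ⟨⟨hm, hmc.trans hca.le⟩, ⟨hm, hmc.trans hcb.le⟩⟩

lemma completeUnion_inter_min (h : IsVine rk) {a b : P} (ha : IsMin a) (hb : IsMin b)
    (hab : a ≠ b) : completeUnion a ∩ completeUnion b = ∅ := by
  rw [completeUnion_min ha, completeUnion_min hb]
  simp [Set.singleton_inter_eq_empty, hab.symm]

lemma completeUnion_ncard (h : IsRVine rk) : ∀ v : P, (completeUnion v).ncard = rk v := by
  have key : ∀ n : ℕ, ∀ v : P, rk v = n → (completeUnion v).ncard = rk v := by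
    intro n
    induction n using Nat.strong_induction_on with
    | _ n ih =>
      intro v hv
      by_cases hmin : IsMin v
      · rw [completeUnion_min hmin, h.rk_min v hmin]; simp
      · obtain ⟨a, b, hab, hset⟩ := exists_children h.toIsVine hmin
        have hav : a ⋖ v := by rw [Set.ext_iff] at hset; exact (hset a).2 (by simp)
        have hbv : b ⋖ v := by rw [Set.ext_iff] at hset; exact (hset b).2 (by simp)
        have hra : rk a + 1 = rk v := rk_child h.toIsVine hav
        have hrb : rk b + 1 = rk v := rk_child h.toIsVine hbv
        have hUv := completeUnion_union h.toIsVine hav hbv hab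
        have hcard := Set.ncard_union_add_ncard_inter (completeUnion a) (completeUnion b)
          (Set.toFinite _) (Set.toFinite _)
        have hia : (completeUnion a).ncard = rk a := ih (rk a) (by omega) a rfl
        have hib : (completeUnion b).ncard = rk b := ih (rk b) (by omega) b rfl
        by_cases h1 : rk a = 1
        · have hma : IsMin a := isMin_of_rk_eq_one h.toIsVine h1
          have hmb : IsMin b := isMin_of_rk_eq_one h.toIsVine (by omega)
          have hint := completeUnion_inter_min h.toIsVine hma hmb hab
          rw [hint] at hcard
          rw [hUv]
          simp only [Set.ncard_empty] at hcard
          omega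
        · have h2 : 2 ≤ rk a := by have := one_le_rk h.toIsVine a; omega
          obtain ⟨c, hca, hcb⟩ := h.proximity a b hab (by omega) h2 ⟨v, hav, hbv⟩
          have hint := completeUnion_inter h hav hbv hab hca hcb
          have hic : (completeUnion c).ncard = rk c :=
            ih (rk c) (by have := rk_child h.toIsVine hca; omega) c rfl
          have hrc : rk c + 1 = rk a := rk_child h.toIsVine hca
          rw [hint] at hcard
          rw [hUv]
          omega
  exact fun v => key (rk v) v rfl

/-- The difference of the complete unions of the two children is a singleton. -/
lemma completeUnion_diff_ncard (h : IsRVine rk) {v a b : P} (hav : a ⋖ v) (hbv : b ⋖ v)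
    (hab : a ≠ b) : (completeUnion a \ completeUnion b).ncard = 1 := by
  have hd : completeUnion a \ completeUnion b
      = completeUnion a \ (completeUnion a ∩ completeUnion b) := by
    ext x; simp only [Set.mem_diff, Set.mem_inter_iff]; tauto
  have hsub : completeUnion a ∩ completeUnion b ⊆ completeUnion a := Set.inter_subset_left
  have hcard := Set.ncard_diff hsub (Set.toFinite _)
  have hia := completeUnion_ncard h a
  have hra : rk a + 1 = rk v := rk_child h.toIsVine hav
  by_cases h1 : rk a = 1
  · have hma : IsMin a := isMin_of_rk_eq_one h.toIsVine h1
    have hmb : IsMin b := isMin_of_rk_eq_one h.toIsVine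
      (by have := rk_child h.toIsVine hbv; omega)
    have hint := completeUnion_inter_min h.toIsVine hma hmb hab
    rw [hd, hint, Set.diff_empty]
    omega
  · have h2 : 2 ≤ rk a := by have := one_le_rk h.toIsVine a; omega
    obtain ⟨c, hca, hcb⟩ := h.proximity a b hab
      (by have := rk_child h.toIsVine hbv; omega) h2 ⟨v, hav, hbv⟩
    have hint := completeUnion_inter h hav hbv hab hca hcb
    have hic := completeUnion_ncard h c
    have hrc : rk c + 1 = rk a := rk_child h.toIsVine hca
    rw [hd, hcard, hint, hia, hic]
    omega

/-- The conditioned set is the symmetric difference of the children's complete unions. -/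
lemma conditionedSet_eq (h : IsVine rk) {v a b : P} (hav : a ⋖ v) (hbv : b ⋖ v)
    (hab : a ≠ b) : conditionedSet v
      = (completeUnion a \ completeUnion b) ∪ (completeUnion b \ completeUnion a) := by
  ext m
  simp only [conditionedSet, Set.mem_setOf_eq, Set.mem_union, Set.mem_diff,
    mem_completeUnion]
  constructor
  · rintro ⟨hm, x, ⟨hxv, hmx⟩, huniq⟩
    rcases children_eq h hav hbv hab x hxv with rfl | rfl
    · refine Or.inl ⟨⟨hm, hmx⟩, ?_⟩
      rintro ⟨_, hmb⟩
      exact hab (huniq b ⟨hbv, hmb⟩).symm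
    · refine Or.inr ⟨⟨hm, hmx⟩, ?_⟩
      rintro ⟨_, hma⟩
      exact hab (huniq a ⟨hav, hma⟩)
  · rintro (⟨⟨hm, hma⟩, hnb⟩ | ⟨⟨hm, hmb⟩, hna⟩)
    · refine ⟨hm, a, ⟨hav, hma⟩, ?_⟩
      rintro x ⟨hxv, hmx⟩
      rcases children_eq h hav hbv hab x hxv with rfl | rfl
      · rfl
      · exact absurd ⟨hm, hmx⟩ hnb
    · refine ⟨hm, b, ⟨hbv, hmb⟩, ?_⟩
      rintro x ⟨hxv, hmx⟩
      rcases children_eq h hav hbv hab x hxv with rfl | rfl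
      · exact absurd ⟨hm, hmx⟩ hna
      · rfl

/-- Part 1: the conditioned set of a non-minimal node is a pair of distinct minimals. -/
lemma conditionedSet_pair (h : IsRVine rk) {v : P} (hv : ¬ IsMin v) :
    ∃ i j : P, IsMin i ∧ IsMin j ∧ i ≠ j ∧ conditionedSet v = {i, j} := by
  obtain ⟨a, b, hab, hset⟩ := exists_children h.toIsVine hv
  have hav : a ⋖ v := by rw [Set.ext_iff] at hset; exact (hset a).2 (by simp)
  have hbv : b ⋖ v := by rw [Set.ext_iff] at hset; exact (hset b).2 (by simp)
  obtain ⟨i, hi⟩ := Set.ncard_eq_one.1 (completeUnion_diff_ncard h hav hbv hab)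
  obtain ⟨j, hj⟩ := Set.ncard_eq_one.1 (completeUnion_diff_ncard h hbv hav hab.symm)
  have hiU : i ∈ completeUnion a \ completeUnion b := hi ▸ rfl
  have hjU : j ∈ completeUnion b \ completeUnion a := hj ▸ rfl
  refine ⟨i, j, hiU.1.1, hjU.1.1, ?_, ?_⟩
  · rintro rfl
    exact hjU.2 hiU.1
  · rw [conditionedSet_eq h.toIsVine hav hbv hab, hi, hj]
    rfl
end Union
section Final
variable {P : Type*} [PartialOrder P] [Finite P] {rk : P → ℕ}

lemma walk_first_step {G : SimpleGraph P} {u w : P} (p : G.Walk u w) (huw : u ≠ w) :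
    ∃ x : P, G.Adj u x ∧ x ∈ p.support := by
  cases p with
  | nil => exact absurd rfl huw
  | cons hadj q => exact ⟨_, hadj, by simp⟩

/-- There is a top element whose complete union is the whole set of minimals. -/
lemma exists_top (h : IsRVine rk) (hne : Nonempty P) :
    ∃ t : P, completeUnion t = {x : P | IsMin x} := by
  obtain ⟨x⟩ := hne
  have hrange : (Set.range rk).Nonempty := ⟨rk x, Set.mem_range_self x⟩
  have hmem : vineRank rk ∈ Set.range rk :=
    Nat.sSup_mem hrange (Set.finite_range rk).bddAbove
  obtain ⟨t, ht⟩ := hmem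
  refine ⟨t, Set.eq_of_subset_of_ncard_le (fun m hm => hm.1) ?_ (Set.toFinite _)⟩
  rw [completeUnion_ncard h t, ht, ← h.rank_eq_dim]

/-- Existence: for each pair of distinct minimals there is a node whose conditioned
set is that pair. -/
lemma exists_conditionedSet (h : IsRVine rk) {i j : P} (hi : IsMin i) (hj : IsMin j)
    (hij : i ≠ j) : ∃ v : P, ¬ IsMin v ∧ conditionedSet v = {i, j} := by
  obtain ⟨t, ht⟩ := exists_top h ⟨i⟩
  have hit : i ≤ t := (ht.symm ▸ (Set.mem_setOf_eq ▸ hi) : i ∈ completeUnion t).2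
  have hjt : j ≤ t := (ht.symm ▸ (Set.mem_setOf_eq ▸ hj) : j ∈ completeUnion t).2
  obtain ⟨u, -, humem, humin⟩ :
      ∃ u ≤ t, (i ≤ u ∧ j ≤ u) ∧ ∀ y, (i ≤ y ∧ j ≤ y) → y ≤ u → u ≤ y := by
    obtain ⟨u, hut, hmin⟩ := exists_minimal_le_of_wellFoundedLT (fun y => i ≤ y ∧ j ≤ y)
      t ⟨hit, hjt⟩
    exact ⟨u, hut, hmin.1, fun y hy hyu => hmin.2 hy hyu⟩
  have hnu : ¬ IsMin u := by
    intro hu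
    have : u = i := le_antisymm (hu humem.1) humem.1
    have : u = j := le_antisymm (hu humem.2) humem.2
    exact hij (by aesop)
  obtain ⟨a, b, hab, hset⟩ := exists_children h.toIsVine hnu
  have hav : a ⋖ u := by rw [Set.ext_iff] at hset; exact (hset a).2 (by simp)
  have hbv : b ⋖ u := by rw [Set.ext_iff] at hset; exact (hset b).2 (by simp)
  have hiu : i < u := min_lt_of_not_isMin h.toIsVine hi humem.1 hnu
  have hju : j < u := min_lt_of_not_isMin h.toIsVine hj humem.2 hnu
  have hich := le_child h.toIsVine hiu hset
  have hjch := le_child h.toIsVine hju hset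
  have hnboth : ∀ x : P, x ⋖ u → ¬ (i ≤ x ∧ j ≤ x) := by
    intro x hx hix
    exact absurd (humin x hix hx.le) (not_le_of_gt hx.lt)
  -- helper to conclude in either symmetric case
  have key : ∀ i' j' a' b' : P, IsMin i' → IsMin j' → a' ⋖ u → b' ⋖ u → a' ≠ b' →
      (∀ x : P, x ⋖ u → ¬ (i' ≤ x ∧ j' ≤ x)) → i' ≤ a' → j' ≤ b' →
      conditionedSet u = {i', j'} := by
    intro i j a' b' hi hj ha' hb' hab' hnboth hia' hjb'
    have hnia : ¬ j ≤ a' := fun hja' => hnboth a' ha' ⟨hia', hja'⟩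
    have hnjb : ¬ i ≤ b' := fun hib' => hnboth b' hb' ⟨hib', hjb'⟩
    obtain ⟨i', hi'⟩ := Set.ncard_eq_one.1 (completeUnion_diff_ncard h ha' hb' hab')
    obtain ⟨j', hj'⟩ := Set.ncard_eq_one.1 (completeUnion_diff_ncard h hb' ha' hab'.symm)
    have hii : i ∈ completeUnion a' \ completeUnion b' := ⟨⟨hi, hia'⟩, fun hc => hnjb hc.2⟩
    have hjj : j ∈ completeUnion b' \ completeUnion a' := ⟨⟨hj, hjb'⟩, fun hc => hnia hc.2⟩
    rw [hi'] at hii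
    rw [hj'] at hjj
    rw [conditionedSet_eq h.toIsVine ha' hb' hab', hi', hj', hii, hjj]
    rfl
  refine ⟨u, hnu, ?_⟩
  rcases hich with hia | hib
  · rcases hjch with hja | hjb
    · exact absurd ⟨hia, hja⟩ (hnboth a hav)
    · exact key i j a b hi hj hav hbv hab hnboth hia hjb
  · rcases hjch with hja | hjb
    · rw [Set.pair_comm]
      exact key j i a b hj hi hav hbv hab
        (fun x hx hc => hnboth x hx ⟨hc.2, hc.1⟩) hja hib
    · exact absurd ⟨hib, hjb⟩ (hnboth b hbv)

/-- Any node whose conditioned set is `{i, j}` is a minimal upper bound of `{i, j}`. -/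
lemma minimal_of_conditionedSet (h : IsRVine rk) {v i j : P} (hv : ¬ IsMin v)
    (hij : i ≠ j) (hC : conditionedSet v = {i, j}) :
    (i ≤ v ∧ j ≤ v) ∧ ∀ x : P, x < v → ¬ (i ≤ x ∧ j ≤ x) := by
  have hiC : i ∈ conditionedSet v := hC ▸ (by simp)
  have hjC : j ∈ conditionedSet v := hC ▸ (by simp)
  have hi : IsMin i := hiC.1
  have hj : IsMin j := hjC.1
  obtain ⟨a, b, hab, hset⟩ := exists_children h.toIsVine hv
  have hav : a ⋖ v := by rw [Set.ext_iff] at hset; exact (hset a).2 (by simp)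
  have hbv : b ⋖ v := by rw [Set.ext_iff] at hset; exact (hset b).2 (by simp)
  have hCeq := conditionedSet_eq h.toIsVine hav hbv hab
  constructor
  · constructor
    · obtain ⟨x, ⟨hxv, hix⟩, -⟩ := hiC.2
      exact hix.trans hxv.le
    · obtain ⟨x, ⟨hxv, hjx⟩, -⟩ := hjC.2
      exact hjx.trans hxv.le
  · rintro x hxv ⟨hix, hjx⟩
    obtain ⟨d, hxd, hdv⟩ := exists_le_covby h.toIsVine hxv
    -- i and j are both below the child d; wlog d = a
    have key : ∀ a' b' : P, a' ⋖ v → b' ⋖ v → a' ≠ b' → i ≤ a' → j ≤ a' → False := by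
      intro a' b' ha' hb' hab' hia hja
      have hCeq' := conditionedSet_eq h.toIsVine ha' hb' hab'
      have hiC' : i ∈ (completeUnion a' \ completeUnion b') ∪
          (completeUnion b' \ completeUnion a') := hCeq' ▸ hiC
      have hjC' : j ∈ (completeUnion a' \ completeUnion b') ∪
          (completeUnion b' \ completeUnion a') := hCeq' ▸ hjC
      have hi' : i ∈ completeUnion a' \ completeUnion b' := by
        rcases hiC' with h' | h'
        · exact h'
        · exact absurd ⟨hi, hia⟩ h'.2
      have hj' : j ∈ completeUnion a' \ completeUnion b' := by
        rcases hjC' with h' | h'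
        · exact h'
        · exact absurd ⟨hj, hja⟩ h'.2
      obtain ⟨w, hw⟩ := Set.ncard_eq_one.1 (completeUnion_diff_ncard h ha' hb' hab')
      rw [hw] at hi' hj'
      exact hij (hi'.trans hj'.symm)
    rcases children_eq h.toIsVine hav hbv hab d hdv with rfl | rfl
    · exact key d b hdv hbv hab (hix.trans hxd) (hjx.trans hxd)
    · exact key d a hdv hav (fun h' => hab h'.symm) (hix.trans hxd) (hjx.trans hxd)

/-- Same-rank rigidity: if `u'` is a minimal upper bound of `{i, j}` and `z` is another
upper bound of the same rank, then `z = u'`. -/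
lemma same_rank_unique (h : IsRVine rk) {i j u' z : P} (hi : IsMin i) (hj : IsMin j)
    (hiu : i ≤ u') (hju : j ≤ u') (hiz : i ≤ z) (hjz : j ≤ z) (hrk : rk z = rk u')
    (humin : ∀ x : P, x < u' → ¬ (i ≤ x ∧ j ≤ x)) : z = u' := by
  classical
  by_contra hne
  obtain ⟨p, hp⟩ := subtree_walk h hi (rk u') rfl hrk hiu hiz
  obtain ⟨q, hq⟩ := subtree_walk h hj (rk u') rfl hrk hju hjz
  have hpq : p.bypass = q.bypass := by
    have := (h.forest (rk u')).path_unique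
      ⟨p.bypass, p.bypass_isPath⟩ ⟨q.bypass, q.bypass_isPath⟩
    exact congrArg Subtype.val this
  obtain ⟨x, hadj, hxsup⟩ := walk_first_step p.bypass (Ne.symm hne)
  have hix : i ≤ x := hp x (p.support_bypass_subset hxsup)
  have hjx : j ≤ x := hq x (q.support_bypass_subset (hpq ▸ hxsup))
  obtain ⟨hnexz, hru, hrx, V, huV, hxV⟩ := hadj
  obtain ⟨c, hcu, hcx, hic⟩ := common_child_le h hi hnexz huV hxV hiu hix
  obtain ⟨c', hc'u, hc'x, hjc⟩ := common_child_le h hj hnexz huV hxV hju hjx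
  have hcc : c = c' := common_child_unique h.toIsVine hnexz hcu hcx hc'u hc'x
  exact humin c hcu.lt ⟨hic, hcc ▸ hjc⟩

/-- Nodes of every rank `1 ≤ s ≤ rk y` exist (below `y`). -/
lemma exists_rk_le (h : IsVine rk) : ∀ (n : ℕ) (y : P), rk y = n →
    ∀ s : ℕ, 1 ≤ s → s ≤ n → ∃ z : P, rk z = s := by
  intro n
  induction n using Nat.strong_induction_on with
  | _ n ih =>
    intro y hy s h1 hs
    rcases eq_or_lt_of_le hs with rfl | hlt
    · exact ⟨y, hy⟩
    · have hnmin : ¬ IsMin y := by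
        intro hmin; rw [h.rk_min y hmin] at hy; omega
      obtain ⟨a, b, hab, hset⟩ := exists_children h hnmin
      have hav : a ⋖ y := by rw [Set.ext_iff] at hset; exact (hset a).2 (by simp)
      have hra := rk_child h hav
      exact ih (rk a) (by omega) a rfl s h1 (by omega)

/-- Climbing: a node of rank `r` is covered by some node, provided rank `r+1` is
inhabited. -/
lemma exists_covby (h : IsRVine rk) {x w : P} (hw : rk w = rk x + 1) :
    ∃ z : P, x ⋖ z := by
  have h1 : 1 ≤ rk x := one_le_rk h.toIsVine x
  have hnw : ¬ IsMin w := not_isMin_of_two_le_rk h.toIsVine (by omega)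
  obtain ⟨c1, c2, hc12, hset⟩ := exists_children h.toIsVine hnw
  have hc1 : c1 ⋖ w := by rw [Set.ext_iff] at hset; exact (hset c1).2 (by simp)
  have hc2 : c2 ⋖ w := by rw [Set.ext_iff] at hset; exact (hset c2).2 (by simp)
  have hrc1 : rk c1 = rk x := by have := rk_child h.toIsVine hc1; omega
  have hrc2 : rk c2 = rk x := by have := rk_child h.toIsVine hc2; omega
  have hx2 : ∃ x2 : P, rk x2 = rk x ∧ x2 ≠ x := by
    rcases eq_or_ne c1 x with rfl | h'
    · exact ⟨c2, hrc2, fun h'' => hc12 h''.symm⟩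
    · exact ⟨c1, hrc1, h'⟩
  obtain ⟨x2, hrx2, hx2ne⟩ := hx2
  have hconn := h.tree (rk x) h1 (by
    have := rk_le_vineRank (rk := rk) w; omega)
  obtain ⟨w0⟩ := hconn.preconnected ⟨x, rfl⟩ ⟨x2, hrx2⟩
  let w1 : (coverGraph rk (rk x)).Walk x x2 :=
    w0.map (SimpleGraph.Embedding.induce {p : P | rk p = rk x}).toHom
  obtain ⟨z, hadj, -⟩ := walk_first_step w1 (Ne.symm hx2ne)
  obtain ⟨-, -, -, V, hxV, -⟩ := hadj
  exact ⟨V, hxV⟩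

/-- Climbing to any higher inhabited rank. -/
lemma exists_le_rk (h : IsRVine rk) {y : P} :
    ∀ (d : ℕ) (x : P), rk x + d ≤ rk y → ∃ z : P, x ≤ z ∧ rk z = rk x + d := by
  intro d
  induction d with
  | zero => exact fun x _ => ⟨x, le_rfl, rfl⟩
  | succ d ih =>
    intro x hd
    obtain ⟨z, hxz, hrz⟩ := ih x (by omega)
    obtain ⟨w, hw⟩ := exists_rk_le h.toIsVine (rk y) y rfl (rk z + 1)
      (by omega) (by omega)
    obtain ⟨z', hzz'⟩ := exists_covby h (x := z) hw
    exact ⟨z', hxz.trans hzz'.le, by have := rk_child h.toIsVine hzz'; omega⟩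

/-- Uniqueness: there is at most one node with conditioned set `{i, j}`. -/
lemma unique_conditionedSet (h : IsRVine rk) {i j v v' : P} (hij : i ≠ j)
    (hv : ¬ IsMin v) (hv' : ¬ IsMin v') (hC : conditionedSet v = {i, j})
    (hC' : conditionedSet v' = {i, j}) : v = v' := by
  have hi : IsMin i := by
    have : i ∈ conditionedSet v := hC ▸ (by simp)
    exact this.1
  have hj : IsMin j := by
    have : j ∈ conditionedSet v := hC ▸ (by simp)
    exact this.1
  obtain ⟨⟨hiv, hjv⟩, hmin⟩ := minimal_of_conditionedSet h hv hij hC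
  obtain ⟨⟨hiv', hjv'⟩, hmin'⟩ := minimal_of_conditionedSet h hv' hij hC'
  -- wlog rk v ≤ rk v'
  have key : ∀ u u' : P, rk u ≤ rk u' → i ≤ u → j ≤ u → i ≤ u' → j ≤ u' →
      (∀ x : P, x < u → ¬ (i ≤ x ∧ j ≤ x)) → (∀ x : P, x < u' → ¬ (i ≤ x ∧ j ≤ x)) →
      u = u' := by
    intro u u' hle hiu hju hiu' hju' hum hum'
    obtain ⟨z, huz, hrz⟩ := exists_le_rk h (y := u') (rk u' - rk u) u (by omega)
    have hrz' : rk z = rk u' := by omega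
    have hzu' : z = u' := same_rank_unique h hi hj hiu' hju' (hiu.trans huz)
      (hju.trans huz) hrz' hum'
    rcases eq_or_lt_of_le huz with rfl | hlt
    · exact hzu'
    · exact absurd ⟨hiu, hju⟩ (hum' u (hzu' ▸ hlt))
  rcases le_total (rk v) (rk v') with hle | hle
  · exact key v v' hle hiv hjv hiv' hjv' hmin hmin'
  · exact (key v' v hle hiv' hjv' hiv hjv hmin' hmin).symm
end Final

/-- In an R-vine, the map `v ↦ C_v` is a bijection from the non-minimal nodes to the
two-element subsets of the set of minimal nodes: every non-minimal node has a
two-element conditioned set of minimal nodes, and for every pair of distinct minimal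
nodes `i, j` there is exactly one non-minimal node whose conditioned set is `{i, j}`. -/
theorem conditionedSet_bijection {P : Type*} [PartialOrder P] [Finite P]
    (rk : P → ℕ) (h : IsRVine rk) :
    (∀ v : P, ¬ IsMin v → ∃ i j : P, IsMin i ∧ IsMin j ∧ i ≠ j ∧
      conditionedSet v = {i, j}) ∧
    (∀ i j : P, IsMin i → IsMin j → i ≠ j →
      ∃! v : P, ¬ IsMin v ∧ conditionedSet v = {i, j}) := by
  refine ⟨fun v hv => conditionedSet_pair h hv, fun i j hi hj hij => ?_⟩
  obtain ⟨v, hv, hC⟩ := exists_conditionedSet h hi hj hij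
  exact ⟨v, ⟨hv, hC⟩, fun v' hv' => unique_conditionedSet h hij hv'.1 hv hv'.2 hC⟩
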